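/- The matrix exponential maps 𝔹_m(ℝ) onto 𝔹_m^*(ℝ) = 𝔹_m(ℝ) ∩ GL(2m, ℝ): exp(𝔹_m(ℝ)) = 𝔹_m^*(ℝ). -/

import Mathlib

open NormedSpace

/-- Membership in `𝕊`: a real 2×2 matrix of the form `[[α, β], [-β, α]]`. -/
def MemS (b : Matrix (Fin 2) (Fin 2) ℝ) : Prop :=
  b 0 0 = b 1 1 ∧ b 1 0 = -(b 0 1)

/-- The `(i,j)` 2×2 block of a `2m × 2m` real matrix indexed by `Fin m × Fin 2`. -/
def blk {m : ℕ} (B : Matrix (Fin m × Fin 2) (Fin m × Fin 2) ℝ) (i j : Fin m) :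
    Matrix (Fin 2) (Fin 2) ℝ :=
  Matrix.of fun a b => B (i, a) (j, b)

/-- Membership in `𝔹_m(ℝ)`: block lower triangular with 2×2 blocks in `𝕊` and all diagonal
blocks equal. -/
def MemB {m : ℕ} (B : Matrix (Fin m × Fin 2) (Fin m × Fin 2) ℝ) : Prop :=
  (∀ i j : Fin m, MemS (blk B i j)) ∧
  (∀ i j : Fin m, i < j → blk B i j = 0) ∧
  (∀ i j : Fin m, blk B i i = blk B j j)

namespace ExpBAux

open Matrix

/-! ### The 2×2 real representation of ℂ -/

/-- The real 2×2 representation of a complex number. -/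
def cplx (z : ℂ) : Matrix (Fin 2) (Fin 2) ℝ := !![z.re, z.im; -z.im, z.re]

/-- `cplx` as a ring homomorphism. -/
def cplxHom : ℂ →+* Matrix (Fin 2) (Fin 2) ℝ where
  toFun := cplx
  map_one' := by
    ext a b
    fin_cases a <;> fin_cases b <;> simp [cplx, Matrix.one_apply]
  map_mul' z w := by
    ext a b
    fin_cases a <;> fin_cases b <;>
      simp [cplx, Matrix.mul_apply, Fin.sum_univ_two, Complex.mul_re, Complex.mul_im] <;> ring
  map_zero' := by
    ext a b
    fin_cases a <;> fin_cases b <;> simp [cplx]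
  map_add' z w := by
    ext a b
    fin_cases a <;> fin_cases b <;> simp [cplx] <;> ring

@[simp] lemma cplxHom_apply (z : ℂ) : cplxHom z = cplx z := rfl

lemma cplx_injective : Function.Injective cplx := cplxHom.injective

lemma memS_cplx (z : ℂ) : MemS (cplx z) := by
  constructor <;> simp [cplx]

/-! ### The block embedding `Phi` -/

variable {m : ℕ}

/-- The embedding of `m×m` complex matrices as `2m×2m` real matrices. -/
def Phi (m : ℕ) : Matrix (Fin m) (Fin m) ℂ →+* Matrix (Fin m × Fin 2) (Fin m × Fin 2) ℝ where
  toFun C := Matrix.of fun p q => cplx (C p.1 q.1) p.2 q.2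
  map_one' := by
    ext ⟨i, a⟩ ⟨j, b⟩
    show cplx ((1 : Matrix (Fin m) (Fin m) ℂ) i j) a b = _
    by_cases h : i = j
    · subst h
      simp [Matrix.one_apply, Prod.ext_iff, ← cplxHom_apply]
    · simp [Matrix.one_apply, Prod.ext_iff, h, ← cplxHom_apply]
  map_mul' C D := by
    ext ⟨i, a⟩ ⟨j, b⟩
    show cplx ((C * D) i j) a b = _
    calc cplx ((C * D) i j) a b
        = ∑ k, cplx (C i k * D k j) a b := by
          rw [Matrix.mul_apply, ← cplxHom_apply, map_sum]
          simp [Matrix.sum_apply]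
      _ = ∑ k, ∑ c, cplx (C i k) a c * cplx (D k j) c b := by
          refine Finset.sum_congr rfl fun k _ => ?_
          rw [← cplxHom_apply, ← cplxHom_apply, ← cplxHom_apply, _root_.map_mul, Matrix.mul_apply]
      _ = _ := by
          rw [Matrix.mul_apply, Fintype.sum_prod_type]
          rfl
  map_zero' := by
    ext ⟨i, a⟩ ⟨j, b⟩
    show cplx ((0 : Matrix (Fin m) (Fin m) ℂ) i j) a b = _
    simp [← cplxHom_apply]
  map_add' C D := by
    ext ⟨i, a⟩ ⟨j, b⟩
    show cplx ((C + D) i j) a b = _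
    simp [← cplxHom_apply]

lemma blk_Phi (C : Matrix (Fin m) (Fin m) ℂ) (i j : Fin m) :
    blk (Phi m C) i j = cplx (C i j) := rfl

/-- Membership in the complex model: lower triangular with constant diagonal. -/
def MemT (C : Matrix (Fin m) (Fin m) ℂ) : Prop :=
  (∀ i j : Fin m, i < j → C i j = 0) ∧ (∀ i j : Fin m, C i i = C j j)

lemma memB_Phi {C : Matrix (Fin m) (Fin m) ℂ} : MemB (Phi m C) ↔ MemT C := by
  constructor
  · rintro ⟨-, h2, h3⟩
    constructor
    · intro i j hij
      apply cplx_injective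
      rw [← blk_Phi, h2 i j hij, ← cplxHom_apply, map_zero]
    · intro i j
      apply cplx_injective
      rw [← blk_Phi, ← blk_Phi, h3 i j]
  · rintro ⟨h1, h2⟩
    refine ⟨fun i j => ?_, fun i j hij => ?_, fun i j => ?_⟩
    · rw [blk_Phi]; exact memS_cplx _
    · rw [blk_Phi, h1 i j hij, ← cplxHom_apply, map_zero]
    · rw [blk_Phi, blk_Phi, h2 i j]

lemma exists_Phi {B : Matrix (Fin m × Fin 2) (Fin m × Fin 2) ℝ} (hB : MemB B) :
    ∃ C : Matrix (Fin m) (Fin m) ℂ, Phi m C = B := by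
  refine ⟨Matrix.of fun i j => ⟨B (i, 0) (j, 0), B (i, 0) (j, 1)⟩, ?_⟩
  ext ⟨i, a⟩ ⟨j, b⟩
  have hS := hB.1 i j
  have hS1 : B (i, 0) (j, 0) = B (i, 1) (j, 1) := hS.1
  have hS2 : B (i, 1) (j, 0) = -(B (i, 0) (j, 1)) := hS.2
  show cplx _ a b = _
  fin_cases a <;> fin_cases b <;> simp [cplx, hS1, hS2]

/-! ### Strictly lower triangular filtration -/

/-- `LT d M`: the entry `M i j` vanishes unless `i ≥ j + d`. -/
def LT (d : ℕ) (M : Matrix (Fin m) (Fin m) ℂ) : Prop :=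
  ∀ i j : Fin m, (i : ℕ) < (j : ℕ) + d → M i j = 0

namespace LT

lemma mono {d e : ℕ} {M : Matrix (Fin m) (Fin m) ℂ} (h : LT d M) (he : e ≤ d) : LT e M :=
  fun i j hij => h i j (by omega)

lemma zero (d : ℕ) : LT d (0 : Matrix (Fin m) (Fin m) ℂ) := fun _ _ _ => rfl

lemma one : LT 0 (1 : Matrix (Fin m) (Fin m) ℂ) := fun i j hij =>
  Matrix.one_apply_ne (by intro h; subst h; omega)

lemma add {d : ℕ} {M N : Matrix (Fin m) (Fin m) ℂ} (hM : LT d M) (hN : LT d N) :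
    LT d (M + N) := fun i j hij => by
  rw [Matrix.add_apply, hM i j hij, hN i j hij, add_zero]

lemma neg {d : ℕ} {M : Matrix (Fin m) (Fin m) ℂ} (hM : LT d M) : LT d (-M) :=
  fun i j hij => by rw [Matrix.neg_apply, hM i j hij, neg_zero]

lemma sub {d : ℕ} {M N : Matrix (Fin m) (Fin m) ℂ} (hM : LT d M) (hN : LT d N) :
    LT d (M - N) := fun i j hij => by
  rw [Matrix.sub_apply, hM i j hij, hN i j hij, sub_zero]

lemma smul {α : Type*} [SMulZeroClass α ℂ] {d : ℕ} {M : Matrix (Fin m) (Fin m) ℂ}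
    (hM : LT d M) (c : α) : LT d (c • M) := fun i j hij => by
  rw [Matrix.smul_apply, hM i j hij, smul_zero]

lemma sum {ι : Type*} {s : Finset ι} {d : ℕ} {f : ι → Matrix (Fin m) (Fin m) ℂ}
    (h : ∀ k ∈ s, LT d (f k)) : LT d (∑ k ∈ s, f k) := fun i j hij => by
  rw [Matrix.sum_apply]
  exact Finset.sum_eq_zero fun k hk => h k hk i j hij

lemma mul {a b : ℕ} {M N : Matrix (Fin m) (Fin m) ℂ} (hM : LT a M) (hN : LT b N) :
    LT (a + b) (M * N) := fun i j hij => by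
  rw [Matrix.mul_apply]
  refine Finset.sum_eq_zero fun l _ => ?_
  by_cases hl : (i : ℕ) < (l : ℕ) + a
  · rw [hM i l hl, zero_mul]
  · rw [hN l j (by omega), mul_zero]

lemma pow {d : ℕ} {M : Matrix (Fin m) (Fin m) ℂ} (hM : LT d M) :
    ∀ k, LT (k * d) (M ^ k)
  | 0 => by rw [pow_zero, Nat.zero_mul]; exact one
  | (k + 1) => by
      rw [pow_succ]
      have := (pow hM k).mul hM
      rwa [show k * d + d = (k + 1) * d by ring] at this

lemma pow_eq_zero {M : Matrix (Fin m) (Fin m) ℂ} (hM : LT 1 M) : M ^ m = 0 := by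
  ext i j
  rw [Matrix.zero_apply]
  exact (hM.pow m) i j (by have := i.isLt; omega)

end LT

/-! ### exp of a nilpotent matrix is a finite sum -/

lemma exp_nilpotent_sum {K : ℕ} {M : Matrix (Fin m) (Fin m) ℂ} (h : M ^ K = 0) :
    exp M = ∑ k ∈ Finset.range K, (k.factorial : ℝ)⁻¹ • M ^ k := by
  rw [exp_eq_tsum ℝ]
  refine tsum_eq_sum fun k hk => ?_
  rw [pow_eq_zero_of_le (le_of_not_gt fun hlt => hk (Finset.mem_range.mpr hlt)) h, smul_zero]

/-! ### The key surjectivity induction -/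

lemma key : ∀ n d, 1 ≤ d → m ≤ d + n → ∀ M : Matrix (Fin m) (Fin m) ℂ, LT d M →
    ∃ L, LT d L ∧ (∀ X, Commute X M → Commute X L) ∧ exp L = 1 + M := by
  intro n
  induction n with
  | zero =>
    intro d _ hmd M hM
    have hM0 : M = 0 := by
      ext i j
      rw [Matrix.zero_apply]
      exact hM i j (by have := i.isLt; omega)
    refine ⟨0, LT.zero d, fun X _ => Commute.zero_right X, ?_⟩
    rw [hM0, exp_zero, add_zero]
  | succ n ih =>
    intro d hd hmd M hM
    have hM1 : LT 1 M := hM.mono hd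
    have hpow : ∀ k, 2 ≤ k → LT (d + 1) (M ^ k) := fun k hk =>
      (hM.pow k).mono (by
        calc d + 1 ≤ 2 * d := by omega
        _ ≤ k * d := Nat.mul_le_mul_right d hk)
    have hMK : M ^ (m + 2) = 0 := pow_eq_zero_of_le (by omega) hM1.pow_eq_zero
    have hexp : exp M = ∑ k ∈ Finset.range (m + 2), (k.factorial : ℝ)⁻¹ • M ^ k :=
      exp_nilpotent_sum hMK
    set s : Matrix (Fin m) (Fin m) ℂ := ∑ k ∈ Finset.Ico 2 (m + 2), (k.factorial : ℝ)⁻¹ • M ^ k with hs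
    have hsplit : exp M = 1 + M + s := by
      rw [hexp, Finset.range_eq_Ico, Finset.sum_eq_sum_Ico_succ_bot (by omega),
        Finset.sum_eq_sum_Ico_succ_bot (by omega)]
      norm_num [add_assoc]
      exact hs.symm
    have hsLT : LT (d + 1) s :=
      LT.sum fun k hk => (hpow k (Finset.mem_Ico.mp hk).1).smul _
    have hsC : ∀ X, Commute X M → Commute X s := fun X hX =>
      Commute.sum_right _ _ _ fun k _ => (hX.pow_right k).smul_right _
    set V : Matrix (Fin m) (Fin m) ℂ := ∑ k ∈ Finset.range (m + 2), (-M) ^ k with hV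
    have hVM : (1 + M) * V = 1 := by
      have h := mul_geom_sum (-M) (m + 2)
      have h0 : (-M) ^ (m + 2) = 0 := by rw [neg_pow, hMK, mul_zero]
      rw [h0, zero_sub] at h
      have h1 : -(-M - 1) * V = 1 := by rw [neg_mul, hV, h, neg_neg]
      have h2 : -(-M - 1) = 1 + M := by abel
      rwa [h2] at h1
    have hVLT : LT 0 V :=
      LT.sum fun k _ => ((hM1.neg).pow k).mono (Nat.zero_le _)
    have hVC : ∀ X, Commute X M → Commute X V := fun X hX =>
      Commute.sum_right _ _ _ fun k _ => (hX.neg_right).pow_right k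
    set r : Matrix (Fin m) (Fin m) ℂ := V * s with hr
    have hrLT : LT (d + 1) r := by
      have := hVLT.mul hsLT
      rwa [Nat.zero_add] at this
    have hrC : ∀ X, Commute X M → Commute X r := fun X hX =>
      (hVC X hX).mul_right (hsC X hX)
    have hfact : exp M = (1 + M) * (1 + r) := by
      rw [hsplit, hr, mul_add, mul_one, ← mul_assoc, hVM, one_mul]
    obtain ⟨L', hL'LT, hL'C, hL'exp⟩ := ih (d + 1) (by omega) (by omega) r hrLT
    have hML' : Commute M L' := hL'C M (hrC M (Commute.refl M))
    refine ⟨M - L', hM.sub (hL'LT.mono (by omega)), ?_, ?_⟩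
    · intro X hX
      exact hX.sub_right (hL'C X (hrC X hX))
    · have hC : Commute (M - L') L' := hML'.sub_left (Commute.refl L')
      have he : exp (M - L') * exp L' = exp M := by
        rw [← Matrix.exp_add_of_commute _ _ hC, sub_add_cancel]
      rw [hL'exp, hfact] at he
      have hu : IsUnit (1 + r) := by
        rw [← hL'exp]; exact Matrix.isUnit_exp L'
      exact hu.mul_right_cancel he

/-! ### Compatibility of `exp` with `Phi` and scalars -/

lemma continuous_Phi : Continuous (Phi m) := by
  refine continuous_matrix fun p q => ?_
  obtain ⟨i, a⟩ := p
  obtain ⟨j, b⟩ := q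
  have h1 : Continuous fun C : Matrix (Fin m) (Fin m) ℂ => C i j :=
    (continuous_apply j).comp (continuous_apply i)
  show Continuous fun C : Matrix (Fin m) (Fin m) ℂ => cplx (C i j) a b
  have h2 : Continuous fun C : Matrix (Fin m) (Fin m) ℂ => (C i j).re :=
    Complex.continuous_re.comp h1
  have h3 : Continuous fun C : Matrix (Fin m) (Fin m) ℂ => (C i j).im :=
    Complex.continuous_im.comp h1
  fin_cases a <;> fin_cases b <;>
    simp only [cplx, Fin.mk_zero, Fin.mk_one, Matrix.cons_val', Matrix.cons_val_zero,
      Matrix.cons_val_one, Matrix.head_cons, Matrix.head_fin_const, Matrix.empty_val',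
      Matrix.cons_val_fin_one, Matrix.of_apply] <;>
    first
      | exact h2
      | exact h3
      | exact h3.neg

lemma exp_Phi (C : Matrix (Fin m) (Fin m) ℂ) : exp (Phi m C) = Phi m (exp C) := by
  letI : SeminormedRing (Matrix (Fin m) (Fin m) ℂ) := Matrix.linftyOpSemiNormedRing
  letI : NormedRing (Matrix (Fin m) (Fin m) ℂ) := Matrix.linftyOpNormedRing
  letI : NormedAlgebra ℝ (Matrix (Fin m) (Fin m) ℂ) := Matrix.linftyOpNormedAlgebra
  letI : SeminormedRing (Matrix (Fin m × Fin 2) (Fin m × Fin 2) ℝ) :=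
    Matrix.linftyOpSemiNormedRing
  letI : NormedRing (Matrix (Fin m × Fin 2) (Fin m × Fin 2) ℝ) := Matrix.linftyOpNormedRing
  letI : NormedAlgebra ℝ (Matrix (Fin m × Fin 2) (Fin m × Fin 2) ℝ) :=
    Matrix.linftyOpNormedAlgebra
  letI : NormedAlgebra ℚ (Matrix (Fin m) (Fin m) ℂ) := Matrix.linftyOpNormedAlgebra
  letI : NormedAlgebra ℚ (Matrix (Fin m × Fin 2) (Fin m × Fin 2) ℝ) :=
    Matrix.linftyOpNormedAlgebra
  exact (map_exp (Phi m) continuous_Phi C).symm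

lemma exp_smul_one (c : ℂ) :
    exp (c • (1 : Matrix (Fin m) (Fin m) ℂ)) = Complex.exp c • 1 := by
  letI : SeminormedRing (Matrix (Fin m) (Fin m) ℂ) := Matrix.linftyOpSemiNormedRing
  letI : NormedRing (Matrix (Fin m) (Fin m) ℂ) := Matrix.linftyOpNormedRing
  letI : NormedAlgebra ℝ (Matrix (Fin m) (Fin m) ℂ) := Matrix.linftyOpNormedAlgebra
  letI : NormedAlgebra ℚ (Matrix (Fin m) (Fin m) ℂ) := Matrix.linftyOpNormedAlgebra
  have hcont : Continuous (algebraMap ℂ (Matrix (Fin m) (Fin m) ℂ)) := by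
    refine continuous_matrix fun i j => ?_
    simp only [Matrix.algebraMap_matrix_apply]
    split_ifs
    · exact continuous_id'
    · exact continuous_const
  have h1 := map_exp (algebraMap ℂ (Matrix (Fin m) (Fin m) ℂ)) hcont c
  have h2 : exp c = Complex.exp c :=
    (congrFun Complex.exp_eq_exp_ℂ c).symm
  rw [h2] at h1
  rw [← Algebra.algebraMap_eq_smul_one, ← Algebra.algebraMap_eq_smul_one]
  exact h1.symm

/-! ### exp preserves the complex model -/

lemma memT_exp {C : Matrix (Fin m) (Fin m) ℂ} (hC : MemT C) : MemT (exp C) := by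
  rcases Nat.eq_zero_or_pos m with rfl | hm
  · exact ⟨fun i => i.elim0, fun i => i.elim0⟩
  set i0 : Fin m := ⟨0, hm⟩
  set c : ℂ := C i0 i0 with hc
  set N : Matrix (Fin m) (Fin m) ℂ := C - c • 1 with hN
  have hN1 : LT 1 N := by
    intro i j hij
    have hij' : (i : ℕ) ≤ (j : ℕ) := by omega
    rcases lt_or_eq_of_le hij' with hlt | heq
    · have hne : i ≠ j := fun h => by subst h; omega
      have h0 : C i j = 0 := hC.1 i j (Fin.lt_def.mpr hlt)
      simp [hN, Matrix.sub_apply, Matrix.smul_apply, Matrix.one_apply_ne hne, h0]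
    · have heq' : i = j := Fin.ext heq
      subst heq'
      have : C i i = c := hC.2 i i0
      simp [hN, Matrix.sub_apply, Matrix.smul_apply, Matrix.one_apply_eq, this]
  have hCsum : C = c • 1 + N := by rw [hN]; abel
  have hcomm : Commute (c • (1 : Matrix (Fin m) (Fin m) ℂ)) N := (Commute.one_left N).smul_left c
  have hNK : N ^ (m + 2) = 0 := pow_eq_zero_of_le (by omega) hN1.pow_eq_zero
  set S : Matrix (Fin m) (Fin m) ℂ := ∑ k ∈ Finset.Ico 1 (m + 2), (k.factorial : ℝ)⁻¹ • N ^ k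
    with hS
  have hSN : exp N = 1 + S := by
    rw [exp_nilpotent_sum hNK, Finset.range_eq_Ico, Finset.sum_eq_sum_Ico_succ_bot (by omega)]
    norm_num
    exact hS.symm
  have hSLT : LT 1 S := LT.sum fun k hk => by
    have h1 : 1 ≤ k := (Finset.mem_Ico.mp hk).1
    exact ((hN1.pow k).mono (by omega)).smul _
  have hfin : exp C = Complex.exp c • (1 + S) := by
    calc exp C = exp (c • 1 + N) := by rw [← hCsum]
      _ = exp (c • 1) * exp N := Matrix.exp_add_of_commute _ _ hcomm
      _ = (Complex.exp c • 1) * (1 + S) := by rw [exp_smul_one, hSN]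
      _ = Complex.exp c • (1 + S) := by rw [smul_mul_assoc, one_mul]
  rw [hfin]
  constructor
  · intro i j hij
    have h1 : (1 : Matrix (Fin m) (Fin m) ℂ) i j = 0 := Matrix.one_apply_ne (ne_of_lt hij)
    have h2 : S i j = 0 := hSLT i j (by have := Fin.lt_def.mp hij; omega)
    simp [Matrix.smul_apply, Matrix.add_apply, h1, h2]
  · intro i j
    have hSi : S i i = 0 := hSLT i i (by omega)
    have hSj : S j j = 0 := hSLT j j (by omega)
    simp [Matrix.smul_apply, Matrix.add_apply, Matrix.one_apply_eq, hSi, hSj]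

/-! ### Surjectivity on the complex model -/

lemma nilp_of_diag_zero {C : Matrix (Fin m) (Fin m) ℂ} (hC : MemT C) (hm : 0 < m)
    (h0 : C ⟨0, hm⟩ ⟨0, hm⟩ = 0) : C ^ m = 0 := by
  refine LT.pow_eq_zero fun i j hij => ?_
  have hij' : (i : ℕ) ≤ (j : ℕ) := by omega
  rcases lt_or_eq_of_le hij' with hlt | heq
  · exact hC.1 i j (Fin.lt_def.mpr hlt)
  · have heq' : i = j := Fin.ext heq
    subst heq'
    exact (hC.2 i ⟨0, hm⟩).trans h0

lemma memT_surj {C : Matrix (Fin m) (Fin m) ℂ} (hm : 0 < m) (hC : MemT C)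
    (hc : C ⟨0, hm⟩ ⟨0, hm⟩ ≠ 0) : ∃ A, MemT A ∧ exp A = C := by
  set i0 : Fin m := ⟨0, hm⟩
  set c : ℂ := C i0 i0 with hcdef
  set M : Matrix (Fin m) (Fin m) ℂ := c⁻¹ • C - 1 with hM
  have hM1 : LT 1 M := by
    intro i j hij
    have hij' : (i : ℕ) ≤ (j : ℕ) := by omega
    rcases lt_or_eq_of_le hij' with hlt | heq
    · have hne : i ≠ j := fun h => by subst h; omega
      have h0 : C i j = 0 := hC.1 i j (Fin.lt_def.mpr hlt)
      simp [hM, Matrix.sub_apply, Matrix.smul_apply, Matrix.one_apply_ne hne, h0]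
    · have heq' : i = j := Fin.ext heq
      subst heq'
      have h1 : C i i = c := hC.2 i i0
      simp [hM, Matrix.sub_apply, Matrix.smul_apply, Matrix.one_apply_eq, h1,
        inv_mul_cancel₀ hc]
  obtain ⟨L, hLLT, -, hLexp⟩ := key m 1 le_rfl (by omega) M hM1
  refine ⟨Complex.log c • 1 + L, ⟨?_, ?_⟩, ?_⟩
  · intro i j hij
    have h1 : L i j = 0 := hLLT i j (by have := Fin.lt_def.mp hij; omega)
    simp [Matrix.add_apply, Matrix.smul_apply, Matrix.one_apply_ne (ne_of_lt hij), h1]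
  · intro i j
    have hLi : L i i = 0 := hLLT i i (by omega)
    have hLj : L j j = 0 := hLLT j j (by omega)
    simp [Matrix.add_apply, Matrix.smul_apply, Matrix.one_apply_eq, hLi, hLj]
  · have hcomm : Commute (Complex.log c • (1 : Matrix (Fin m) (Fin m) ℂ)) L :=
      (Commute.one_left L).smul_left _
    rw [Matrix.exp_add_of_commute _ _ hcomm, exp_smul_one, hLexp,
      Complex.exp_log hc, smul_mul_assoc, one_mul]
    have h1M : (1 : Matrix (Fin m) (Fin m) ℂ) + M = c⁻¹ • C := by rw [hM]; abel
    rw [h1M, smul_smul, mul_inv_cancel₀ hc, one_smul]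

end ExpBAux

/-- Appendix (iii): `exp(𝔹_m(ℝ)) = 𝔹_m^*(ℝ) = 𝔹_m(ℝ) ∩ GL(2m, ℝ)`. -/
theorem exp_image_B_eq_B_star (m : ℕ) :
    exp '' {B : Matrix (Fin m × Fin 2) (Fin m × Fin 2) ℝ | MemB B} =
      {B : Matrix (Fin m × Fin 2) (Fin m × Fin 2) ℝ | MemB B ∧ IsUnit B} := by
  ext B
  simp only [Set.mem_image, Set.mem_setOf_eq]
  constructor
  · rintro ⟨A, hA, rfl⟩
    obtain ⟨C, rfl⟩ := ExpBAux.exists_Phi hA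
    refine ⟨?_, Matrix.isUnit_exp _⟩
    rw [ExpBAux.exp_Phi]
    exact ExpBAux.memB_Phi.mpr (ExpBAux.memT_exp (ExpBAux.memB_Phi.mp hA))
  · rintro ⟨hB, hU⟩
    rcases Nat.eq_zero_or_pos m with rfl | hm
    · refine ⟨0, ⟨fun i => i.elim0, fun i => i.elim0, fun i => i.elim0⟩, ?_⟩
      ext ⟨⟨i, hi⟩, b⟩ q
      exact absurd hi (by omega)
    · obtain ⟨C, rfl⟩ := ExpBAux.exists_Phi hB
      have hC := ExpBAux.memB_Phi.mp hB
      have hc : C ⟨0, hm⟩ ⟨0, hm⟩ ≠ 0 := by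
        intro h0
        have hnil := ExpBAux.nilp_of_diag_zero hC hm h0
        have hz : (ExpBAux.Phi m C) ^ m = 0 := by
          rw [← map_pow, hnil, map_zero]
        have hU' : IsUnit ((ExpBAux.Phi m C) ^ m) := hU.pow m
        rw [hz] at hU'
        have h01 := isUnit_zero_iff.mp hU'
        have := congrFun (congrFun h01 (⟨0, hm⟩, 0)) (⟨0, hm⟩, 0)
        simp [Matrix.one_apply] at this
      obtain ⟨A, hAT, hAexp⟩ := ExpBAux.memT_surj hm hC hc
      exact ⟨ExpBAux.Phi m A, ExpBAux.memB_Phi.mpr hAT, by rw [ExpBAux.exp_Phi, hAexp]⟩
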